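/- (Proposition 1, momentum part.) Let n be a positive integer, g ∈ ℝⁿ a row vector, H an n×n real matrix with H·H = 0, and μ, γ real numbers. Define the MIFGSM-with-APAA iterates G_1 = g, Δ_1 = γ·g, and for every t ≥ 1: G_{t+1} = μ·G_t + (g + Δ_t H) and Δ_{t+1} = Δ_t + γ·G_{t+1}, where Δ_t H denotes the row-vector–matrix product. Then for every m ≥ 1, the accumulated momentum satisfies G_m = a_m·g + (b_m·γ)·(g H), where a_m and b_m are the MIFGSM-with-APAA coefficient sequences. -/

import Mathlib

/-- First-order gradient coefficient: a_m = ∑_{i=1}^{m} μ^{i-1}. -/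
noncomputable def aCoef (μ : ℝ) (m : ℕ) : ℝ :=
  ∑ i ∈ Finset.Icc 1 m, μ ^ (i - 1)

/-- Second-order gradient coefficient: b_m = ∑_{i=2}^{m} (m-i+1)(i-1)μ^{i-2}. -/
noncomputable def bCoef (μ : ℝ) (m : ℕ) : ℝ :=
  ∑ i ∈ Finset.Icc 2 m, ((m : ℝ) - (i : ℝ) + 1) * ((i : ℝ) - 1) * μ ^ (i - 2)

/-- First-order perturbation coefficient: c_m = ∑_{i=1}^{m} (m-i+1)μ^{i-1}. -/
noncomputable def cCoef (μ : ℝ) (m : ℕ) : ℝ :=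
  ∑ i ∈ Finset.Icc 1 m, ((m : ℝ) - (i : ℝ) + 1) * μ ^ (i - 1)

/-- Second-order perturbation coefficient:
    d_m = ∑_{i=2}^{m} ((m-i+2)(m-i+1)(i-1)/2)μ^{i-2}. -/
noncomputable def dCoef (μ : ℝ) (m : ℕ) : ℝ :=
  ∑ i ∈ Finset.Icc 2 m,
    (((m : ℝ) - (i : ℝ) + 2) * ((m : ℝ) - (i : ℝ) + 1) * ((i : ℝ) - 1) / 2) * μ ^ (i - 2)

lemma aR (μ : ℝ) (m : ℕ) : aCoef μ m = ∑ i ∈ Finset.range m, μ ^ i := by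
  rw [aCoef, ← Finset.Ico_add_one_right_eq_Icc, Finset.sum_Ico_eq_sum_range]
  refine Finset.sum_congr rfl fun i _ => by congr 1; omega

lemma cR (μ : ℝ) (m : ℕ) :
    cCoef μ m = ∑ i ∈ Finset.range m, ((m : ℝ) - (i : ℝ)) * μ ^ i := by
  rw [cCoef, ← Finset.Ico_add_one_right_eq_Icc, Finset.sum_Ico_eq_sum_range]
  refine Finset.sum_congr rfl fun i _ => ?_
  rw [show 1 + i - 1 = i from by omega]
  push_cast
  ring

lemma bR (μ : ℝ) (m : ℕ) :
    bCoef μ (m + 1) = ∑ i ∈ Finset.range m, ((m : ℝ) - (i : ℝ)) * ((i : ℝ) + 1) * μ ^ i := by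
  rw [bCoef, ← Finset.Ico_add_one_right_eq_Icc, Finset.sum_Ico_eq_sum_range]
  refine Finset.sum_congr rfl fun i _ => ?_
  rw [show 2 + i - 2 = i from by omega]
  push_cast
  ring

lemma dR (μ : ℝ) (m : ℕ) :
    dCoef μ (m + 1) = ∑ i ∈ Finset.range m,
      (((m : ℝ) - (i : ℝ) + 1) * ((m : ℝ) - (i : ℝ)) * ((i : ℝ) + 1) / 2) * μ ^ i := by
  rw [dCoef, ← Finset.Ico_add_one_right_eq_Icc, Finset.sum_Ico_eq_sum_range]
  refine Finset.sum_congr rfl fun i _ => ?_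
  rw [show 2 + i - 2 = i from by omega]
  push_cast
  ring

lemma aRec (μ : ℝ) (m : ℕ) : aCoef μ (m + 1) = μ * aCoef μ m + 1 := by
  rw [aR, aR, Finset.sum_range_succ' (fun i => μ ^ i), Finset.mul_sum]
  simp [pow_succ, mul_comm]

lemma cRec (μ : ℝ) (m : ℕ) : cCoef μ (m + 1) = cCoef μ m + aCoef μ (m + 1) := by
  rw [cR, cR, aR]
  have h1 : ∑ i ∈ Finset.range (m + 1), (((m + 1 : ℕ) : ℝ) - (i : ℝ)) * μ ^ i
      = ∑ i ∈ Finset.range (m + 1), (((m : ℝ) - (i : ℝ)) * μ ^ i + μ ^ i) := by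
    refine Finset.sum_congr rfl fun i _ => ?_; push_cast; ring
  rw [h1, Finset.sum_add_distrib, Finset.sum_range_succ (fun i => ((m : ℝ) - (i : ℝ)) * μ ^ i)]
  simp

lemma bRec (μ : ℝ) (k : ℕ) :
    bCoef μ (k + 2) = μ * bCoef μ (k + 1) + cCoef μ (k + 1) := by
  rw [show k + 2 = (k + 1) + 1 from rfl, bR, bR, cR]
  rw [Finset.sum_range_succ' (fun i => (((k + 1 : ℕ) : ℝ) - (i : ℝ)) * ((i : ℝ) + 1) * μ ^ i)]
  rw [Finset.mul_sum]
  rw [Finset.sum_range_succ' (fun i => (((k + 1 : ℕ) : ℝ) - (i : ℝ)) * μ ^ i)]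
  rw [← add_assoc, ← Finset.sum_add_distrib]
  congr 1
  · refine Finset.sum_congr rfl fun i _ => ?_
    push_cast
    ring
  · push_cast
    ring

lemma dRec (μ : ℝ) (k : ℕ) :
    dCoef μ (k + 2) = dCoef μ (k + 1) + bCoef μ (k + 2) := by
  rw [show k + 2 = (k + 1) + 1 from rfl, dR, dR, bR]
  have h : (∑ i ∈ Finset.range k,
        (((k : ℝ) - (i : ℝ) + 1) * ((k : ℝ) - (i : ℝ)) * ((i : ℝ) + 1) / 2) * μ ^ i)
      = ∑ i ∈ Finset.range (k + 1),
        (((k : ℝ) - (i : ℝ) + 1) * ((k : ℝ) - (i : ℝ)) * ((i : ℝ) + 1) / 2) * μ ^ i := by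
    rw [Finset.sum_range_succ]
    rw [show (((k : ℝ) - (k : ℝ) + 1) * ((k : ℝ) - (k : ℝ)) * ((k : ℝ) + 1) / 2) * μ ^ k = 0
      from by ring, add_zero]
  rw [h, ← Finset.sum_add_distrib]
  refine Finset.sum_congr rfl fun i _ => ?_
  push_cast
  ring

/-- Proposition 1, momentum part: under the first-order model (H·H = 0), the MIFGSM-with-APAA
    momentum satisfies G_m = a_m·g + (b_m·γ)·(gH) for every m ≥ 1. -/
theorem mifgsm_apaa_momentum_closed_form
    (n : ℕ) (hn : 0 < n) (g : Fin n → ℝ) (H : Matrix (Fin n) (Fin n) ℝ)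
    (hH : H * H = 0) (μ γ : ℝ)
    (G Δ : ℕ → Fin n → ℝ)
    (hG1 : G 1 = g) (hΔ1 : Δ 1 = γ • g)
    (hG : ∀ t : ℕ, 1 ≤ t → G (t + 1) = μ • G t + (g + Matrix.vecMul (Δ t) H))
    (hΔ : ∀ t : ℕ, 1 ≤ t → Δ (t + 1) = Δ t + γ • G (t + 1)) :
    ∀ m : ℕ, 1 ≤ m →
      G m = aCoef μ m • g + (bCoef μ m * γ) • Matrix.vecMul g H := by
  set gh := Matrix.vecMul g H with hgh
  have hgh0 : Matrix.vecMul gh H = 0 := by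
    rw [hgh, Matrix.vecMul_vecMul, hH, Matrix.vecMul_zero]
  have key : ∀ m : ℕ, 1 ≤ m →
      (G m = aCoef μ m • g + (bCoef μ m * γ) • gh) ∧
      (Δ m = (cCoef μ m * γ) • g + (dCoef μ m * γ * γ) • gh) := by
    intro m hm
    induction m, hm using Nat.le_induction with
    | base =>
      constructor
      · rw [hG1]
        simp [aCoef, bCoef]
      · rw [hΔ1]
        simp [cCoef, dCoef]
    | succ m hm ih =>
      obtain ⟨hGm, hΔm⟩ := ih
      obtain ⟨k, rfl⟩ := Nat.exists_eq_add_of_le hm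
      rw [show 1 + k = k + 1 from by ring] at *
      have hGs : G (k + 1 + 1) = aCoef μ (k + 1 + 1) • g + (bCoef μ (k + 1 + 1) * γ) • gh := by
        rw [hG _ hm, hGm, hΔm]
        rw [Matrix.add_vecMul, Matrix.smul_vecMul, Matrix.smul_vecMul, hgh0, ← hgh]
        rw [show k + 1 + 1 = k + 2 from rfl, aRec μ (k + 1), bRec μ k]
        module
      refine ⟨hGs, ?_⟩
      rw [hΔ _ hm, hΔm, hGs]
      rw [show k + 1 + 1 = k + 2 from rfl, cRec μ (k + 1), dRec μ k]
      module
  exact fun m hm => (key m hm).1
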